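/- Let π and q be probability vectors with π_i > 0 and q_i > 0 for all i, and suppose π ≠ q (the Forecaster offers probabilistic odds based on an incorrect probability estimate). Let X_1, X_2, ... be i.i.d. with P(X_k = i) = π_i and let the Client bet proportions p = π of their entire wealth at each play, so W_n = W_0 ∏_{k=1}^n (π_{X_k}/q_{X_k}) with W_0 > 0. Then the growth rate ∑_i π_i log(π_i/q_i) is strictly positive, and W_n → ∞ almost surely: the Client almost surely bankrupts the Forecaster. -/

import Mathlib

open Finset MeasureTheory ProbabilityTheory Filter

/-- If the Forecaster offers probabilistic odds `q` (`∑ q_i = 1`) based on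
an incorrect estimate (`q ≠ π`), and the Client bets their entire wealth in the Kelly
proportions `p = π`, so `W_n = W_0 ∏_{k<n} π_{X_k}/q_{X_k}` with the `X_k` i.i.d.
according to `π`, then the growth rate `∑ π_i log(π_i/q_i)` is strictly positive and
`W_n → ∞` almost surely: the Client almost surely bankrupts the Forecaster. -/
theorem kelly_bankrupts_wrong_probabilistic_odds (m : ℕ) (Ω : Type*) [MeasurableSpace Ω]
    (μ : Measure Ω) [IsProbabilityMeasure μ]
    (π q : Fin m → ℝ)
    (hπ : ∀ i, 0 < π i) (hπsum : ∑ i, π i = 1)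
    (hq : ∀ i, 0 < q i) (hqsum : ∑ i, q i = 1)
    (hne : π ≠ q)
    (X : ℕ → Ω → Fin m) (hmeas : ∀ k, Measurable (X k))
    (hindep : iIndepFun X μ)
    (hdist : ∀ k i, μ {ω | X k ω = i} = ENNReal.ofReal (π i))
    (W₀ : ℝ) (hW₀ : 0 < W₀)
    (W : ℕ → Ω → ℝ)
    (hW : ∀ n ω, W n ω = W₀ * ∏ k ∈ Finset.range n, π (X k ω) / q (X k ω)) :
    0 < ∑ i, π i * Real.log (π i / q i) ∧
    ∀ᵐ ω ∂μ, Tendsto (fun n : ℕ => W n ω) atTop atTop := by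
  -- Gibbs' inequality
  have hpos : 0 < ∑ i, π i * Real.log (π i / q i) := by
    obtain ⟨j, hj⟩ : ∃ j, π j ≠ q j := by
      by_contra h; push_neg at h; exact hne (funext h)
    have key : ∀ i, π i - q i ≤ π i * Real.log (π i / q i) := by
      intro i
      have h1 : Real.log (q i / π i) ≤ q i / π i - 1 :=
        Real.log_le_sub_one_of_pos (div_pos (hq i) (hπ i))
      have h2 : Real.log (π i / q i) = - Real.log (q i / π i) := by
        rw [← Real.log_inv]; congr 1; field_simp
      rw [h2]
      rw [div_sub_one (hπ i).ne'] at h1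
      have h4 := (le_div_iff₀ (hπ i)).mp h1
      linarith
    have keyj : π j - q j < π j * Real.log (π j / q j) := by
      have h1 : Real.log (q j / π j) < q j / π j - 1 :=
        Real.log_lt_sub_one_of_pos (div_pos (hq j) (hπ j))
          (by
            intro h
            apply hj
            have := (div_eq_one_iff_eq (hπ j).ne').mp h
            linarith)
      have h2 : Real.log (π j / q j) = - Real.log (q j / π j) := by
        rw [← Real.log_inv]; congr 1; field_simp
      rw [h2]
      rw [div_sub_one (hπ j).ne'] at h1
      have h4 := (lt_div_iff₀ (hπ j)).mp h1
      linarith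
    have : ∑ i, (π i - q i) < ∑ i, π i * Real.log (π i / q i) :=
      Finset.sum_lt_sum (fun i _ => key i) ⟨j, Finset.mem_univ j, keyj⟩
    simpa [Finset.sum_sub_distrib, hπsum, hqsum] using this
  refine ⟨hpos, ?_⟩
  set c := ∑ i, π i * Real.log (π i / q i) with hc
  set f : Fin m → ℝ := fun i => Real.log (π i / q i) with hf
  set Y : ℕ → Ω → ℝ := fun k ω => f (X k ω) with hY
  have hfm : Measurable f := measurable_of_finite f
  have hYmeas : ∀ k, Measurable (Y k) := fun k => hfm.comp (hmeas k)
  have hmap : ∀ k, Measure.map (X k) μ = Measure.map (X 0) μ := by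
    intro k
    apply MeasureTheory.Measure.ext_of_singleton
    intro i
    rw [Measure.map_apply (hmeas k) (measurableSet_singleton i),
        Measure.map_apply (hmeas 0) (measurableSet_singleton i)]
    show μ {ω | X k ω = i} = μ {ω | X 0 ω = i}
    rw [hdist k i, hdist 0 i]
  have hident : ∀ k, IdentDistrib (Y k) (Y 0) μ μ := by
    intro k
    exact (IdentDistrib.mk (hmeas k).aemeasurable (hmeas 0).aemeasurable (hmap k)).comp hfm
  have hint : Integrable (Y 0) μ := by
    have : Integrable f (Measure.map (X 0) μ) := Integrable.of_finite
    exact (integrable_map_measure this.1 (hmeas 0).aemeasurable).mp this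
  have hpind : Pairwise (Function.onFun (IndepFun · · μ) Y) := by
    intro i j hij
    exact (hindep.indepFun hij).comp hfm hfm
  have hEY : μ[Y 0] = c := by
    have h1 : μ[Y 0] = ∫ x, f x ∂(Measure.map (X 0) μ) := by
      rw [integral_map (hmeas 0).aemeasurable hfm.aestronglyMeasurable]
    rw [h1, integral_fintype Integrable.of_finite]
    rw [hc]
    apply Finset.sum_congr rfl
    intro i _
    rw [measureReal_def, Measure.map_apply (hmeas 0) (measurableSet_singleton i)]
    show ((μ {ω | X 0 ω = i}).toReal) • f i = _
    rw [hdist 0 i, ENNReal.toReal_ofReal (hπ i).le, smul_eq_mul]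
  have hslln := strong_law_ae_real Y hint hpind hident
  rw [hEY] at hslln
  filter_upwards [hslln] with ω hω
  -- S n / n → c > 0 hence S n → ∞
  have hS : Tendsto (fun n : ℕ => ∑ k ∈ range n, Y k ω) atTop atTop := by
    have h1 : Tendsto (fun n : ℕ => ((∑ k ∈ range n, Y k ω) / n) * n) atTop atTop :=
      Tendsto.pos_mul_atTop hpos hω tendsto_natCast_atTop_atTop
    apply h1.congr'
    filter_upwards [eventually_ge_atTop 1] with n hn
    have : (n : ℝ) ≠ 0 := by positivity
    field_simp
  have hWe : ∀ n, W n ω = W₀ * Real.exp (∑ k ∈ range n, Y k ω) := by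
    intro n
    rw [hW, Real.exp_sum]
    congr 1
    apply Finset.prod_congr rfl
    intro k _
    rw [hY, hf, Real.exp_log (div_pos (hπ _) (hq _))]
  simp only [hWe]
  exact (Real.tendsto_exp_atTop.comp hS).const_mul_atTop hW₀
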